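/- Let n ≥ 1, let a, b ∈ ℤ, and let I = (i_1,…,i_r) be a partition of n into positive parts. Then A(a,I) = A(b,I); that is, the integer coeff_{x·y^{n−1}}(∏_{q=1}^r c_{i_q}(a)) + a·coeff_{y^n}(∏_{q=1}^r c_{i_q}(a)) does not depend on a. (This is the Chern-number form of the paper's main Theorem 1: the complex manifolds P^n(a), the projectivisations ℙ(η₁^a ⊕ ℂ^{n−1}) over ℂP¹, corresponding to different a ∈ ℤ are complex bordant to each other, since by the Milnor–Novikov theorem stably complex manifolds with equal Chern numbers are bordant.) -/

import Mathlib

open MvPolynomial Finset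

/-- `x = X 0` in `ℤ[x,y]`. -/
noncomputable def xv : MvPolynomial (Fin 2) ℤ := MvPolynomial.X 0

/-- `y = X 1` in `ℤ[x,y]`. -/
noncomputable def yv : MvPolynomial (Fin 2) ℤ := MvPolynomial.X 1

/-- The `i`-th Chern class `c_i(a)` of the tangent bundle of `P^n(a)`:
`C(n,i)·y^i + (2·C(n,i−1) − a·C(n−1,i−1))·x·y^{i−1}`. -/
noncomputable def chern (n : ℕ) (a : ℤ) (i : ℕ) : MvPolynomial (Fin 2) ℤ :=
  MvPolynomial.C (n.choose i : ℤ) * yv ^ i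
    + MvPolynomial.C (2 * (n.choose (i - 1) : ℤ) - a * ((n - 1).choose (i - 1) : ℤ))
      * xv * yv ^ (i - 1)

/-- Coefficient of the monomial `x·y^{n-1}`. -/
noncomputable def coeffXY (n : ℕ) (f : MvPolynomial (Fin 2) ℤ) : ℤ :=
  f.coeff (Finsupp.single (0 : Fin 2) 1 + Finsupp.single (1 : Fin 2) (n - 1))

/-- Coefficient of the monomial `y^n`. -/
noncomputable def coeffY (n : ℕ) (f : MvPolynomial (Fin 2) ℤ) : ℤ :=
  f.coeff (Finsupp.single (1 : Fin 2) n)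

/-- The Chern number `A(a,I) = coeff_{x·y^{n−1}}(∏ c_{i_q}(a)) + a·coeff_{y^n}(∏ c_{i_q}(a))`. -/
noncomputable def chernNum (n : ℕ) (a : ℤ) {r : ℕ} (i : Fin r → ℕ) : ℤ :=
  coeffXY n (∏ q, chern n a (i q)) + a * coeffY n (∏ q, chern n a (i q))

open TrivSqZeroExt

noncomputable def gmap : Fin 2 → DualNumber ℤ := ![DualNumber.eps, 1]

lemma eps_pow_eq_zero {k : ℕ} (hk : 2 ≤ k) : (DualNumber.eps : DualNumber ℤ) ^ k = 0 := by
  obtain ⟨m, rfl⟩ := Nat.exists_eq_add_of_le hk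
  rw [pow_add, pow_two, DualNumber.eps_mul_eps, zero_mul]

lemma mul_inl_inr (p q u v : ℤ) :
    (inl p + inr q : DualNumber ℤ) * (inl u + inr v) = inl (p * u) + inr (p * v + q * u) := by
  apply TrivSqZeroExt.ext <;>
    simp only [fst_add, snd_add, fst_mul, snd_mul, fst_inl, snd_inl, fst_inr, snd_inr,
      smul_eq_mul, MulOpposite.smul_eq_mul_unop, MulOpposite.unop_op, add_zero, zero_add,
      mul_zero, zero_mul] <;> ring

lemma prod_inl_inr {α : Type} [DecidableEq α] (s : Finset α) (c d : α → ℤ) :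
    ∏ q ∈ s, (inl (c q) + inr (d q) : DualNumber ℤ)
      = inl (∏ q ∈ s, c q) + inr (∑ q ∈ s, d q * ∏ p ∈ s.erase q, c p) := by
  classical
  induction s using Finset.induction_on with
  | empty => simp
  | @insert a s ha ih =>
    have hs : ∑ q ∈ insert a s, d q * ∏ p ∈ (insert a s).erase q, c p
        = c a * ∑ q ∈ s, d q * ∏ p ∈ s.erase q, c p + d a * ∏ p ∈ s, c p := by
      rw [Finset.sum_insert ha, Finset.erase_insert ha, Finset.mul_sum, add_comm]
      congr 1
      refine Finset.sum_congr rfl fun q hq => ?_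
      rw [Finset.erase_insert_of_ne (fun h => ha (by rw [h]; exact hq)),
        Finset.prod_insert (fun h => ha (Finset.mem_of_mem_erase h))]
      ring
    rw [Finset.prod_insert ha, ih, mul_inl_inr, Finset.prod_insert ha, hs]

lemma intCast_eq_inl (c : ℤ) : ((c : DualNumber ℤ)) = inl c := by
  apply TrivSqZeroExt.ext <;> simp

lemma aeval_homog (n : ℕ) (hn : 1 ≤ n) (f : MvPolynomial (Fin 2) ℤ)
    (hf : f.IsHomogeneous n) :
    MvPolynomial.aeval gmap f = inl (coeffY n f) + inr (coeffXY n f) := by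
  have hsupp : ∀ d ∈ f.support, d 0 + d 1 = n := by
    intro d hd
    have := hf (MvPolynomial.mem_support_iff.mp hd)
    simpa [Finsupp.weight_apply, Finsupp.sum_fintype, Fin.sum_univ_two] using this
  set my : Fin 2 →₀ ℕ := Finsupp.single 1 n with hmy
  set mxy : Fin 2 →₀ ℕ := Finsupp.single 0 1 + Finsupp.single 1 (n-1) with hmxy
  have hmy0 : my 0 = 0 := by simp [hmy]
  have hmy1 : my 1 = n := by simp [hmy]
  have hmxy0 : mxy 0 = 1 := by simp [hmxy]
  have hmxy1 : mxy 1 = n - 1 := by simp [hmxy, Finsupp.single_apply]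
  have hne : my ≠ mxy := fun h => by rw [h, hmxy0] at hmy0; exact one_ne_zero hmy0
  set t : (Fin 2 →₀ ℕ) → DualNumber ℤ :=
    fun d => (inl (f.coeff d) : DualNumber ℤ) * DualNumber.eps ^ d 0 with ht
  have heval : MvPolynomial.aeval gmap f = ∑ d ∈ f.support, t d := by
    rw [MvPolynomial.aeval_def, MvPolynomial.eval₂_eq' (algebraMap ℤ (DualNumber ℤ)) gmap f]
    refine Finset.sum_congr rfl fun d _ => ?_
    rw [Fin.prod_univ_two, ht]
    simp [gmap, intCast_eq_inl]
  have h1 : ∑ d ∈ f.support, t d = ∑ d ∈ f.support ∪ {my, mxy}, t d := by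
    refine Finset.sum_subset Finset.subset_union_left fun d _ hd => ?_
    have hc : f.coeff d = 0 := MvPolynomial.notMem_support_iff.mp hd
    simp [ht, hc]
  have h2 : ∑ d ∈ ({my, mxy} : Finset _), t d = ∑ d ∈ f.support ∪ {my, mxy}, t d := by
    refine Finset.sum_subset Finset.subset_union_right fun d hd hd2 => ?_
    have hds : d ∈ f.support := by
      rcases Finset.mem_union.mp hd with h | h
      · exact h
      · exact absurd h hd2
    have hsd := hsupp d hds
    have hd0 : 2 ≤ d 0 := by
      by_contra hlt
      push_neg at hlt
      apply hd2
      interval_cases h : d 0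
      · have : d = my := by
          ext j
          fin_cases j
          · show d 0 = my 0; omega
          · show d 1 = my 1; omega
        simp [this]
      · have : d = mxy := by
          ext j
          fin_cases j
          · show d 0 = mxy 0; omega
          · show d 1 = mxy 1; omega
        simp [this]
    simp [ht, eps_pow_eq_zero hd0]
  have tmy : t my = inl (coeffY n f) := by
    rw [ht]; simp only
    rw [hmy0, pow_zero, mul_one, coeffY, ← hmy]
  have tmxy : t mxy = inr (coeffXY n f) := by
    rw [ht]; simp only
    rw [hmxy0, pow_one, DualNumber.eps, inl_mul_inr, smul_eq_mul, mul_one, coeffXY, ← hmxy]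
  rw [heval, h1, ← h2, Finset.sum_pair hne, tmy, tmxy]

lemma chern_homog (n : ℕ) (a : ℤ) (i : ℕ) (hi : 1 ≤ i) :
    (chern n a i).IsHomogeneous i := by
  apply MvPolynomial.IsHomogeneous.add
  · exact MvPolynomial.isHomogeneous_C_mul_X_pow _ _ _
  · have h : (xv * yv ^ (i-1)).IsHomogeneous i := by
      have := (MvPolynomial.isHomogeneous_X ℤ (0 : Fin 2)).mul
        (MvPolynomial.isHomogeneous_X_pow (R := ℤ) (1 : Fin 2) (i-1))
      rwa [show 1 + (i - 1) = i by omega] at this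
    simpa [mul_assoc] using
      h.C_mul (2 * (n.choose (i - 1) : ℤ) - a * ((n - 1).choose (i - 1) : ℤ))

lemma aeval_chern (n : ℕ) (a : ℤ) (i : ℕ) (hi : 1 ≤ i) :
    MvPolynomial.aeval gmap (chern n a i)
      = inl ((n.choose i : ℤ))
        + inr (2 * (n.choose (i - 1) : ℤ) - a * ((n - 1).choose (i - 1) : ℤ)) := by
  rw [chern]
  simp only [map_add, map_mul, map_pow, MvPolynomial.aeval_C, MvPolynomial.aeval_X, xv, yv]
  rw [show gmap 0 = DualNumber.eps from rfl, show gmap 1 = 1 from rfl]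
  rw [TrivSqZeroExt.algebraMap_eq_inl', TrivSqZeroExt.algebraMap_eq_inl']
  simp only [Algebra.algebraMap_self, RingHom.id_apply]
  rw [one_pow, one_pow, mul_one, mul_one, DualNumber.eps, inl_mul_inr, smul_eq_mul, mul_one]

/-- For `n ≥ 1`, any partition `I` of `n` into positive parts and any
`a, b ∈ ℤ`, one has `A(a,I) = A(b,I)`; i.e. the Chern numbers of `P^n(a)` do not depend
on `a`, so the manifolds `P^n(a)` for different `a` are complex bordant to each other. -/
theorem chernNum_independent_of_a (n r : ℕ) (hn : 1 ≤ n) (hr : 1 ≤ r)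
    (i : Fin r → ℕ) (hi : ∀ q, 1 ≤ i q) (hsum : ∑ q, i q = n) (a b : ℤ) :
    chernNum n a i = chernNum n b i := by
  set c : Fin r → ℤ := fun q => (n.choose (i q) : ℤ) with hc
  set e : Fin r → ℤ := fun q => ((n-1).choose (i q - 1) : ℤ) with he
  set P : Fin r → ℤ := fun q => ∏ p ∈ Finset.univ.erase q, c p with hP
  have key : ∑ q, e q * P q = ∏ q, c q := by
    have hcancel : (n : ℤ) ≠ 0 := by exact_mod_cast Nat.one_le_iff_ne_zero.mp hn
    apply mul_left_cancel₀ hcancel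
    rw [Finset.mul_sum]
    have step : ∀ q : Fin r, (n : ℤ) * (e q * P q) = (i q : ℤ) * ∏ p, c p := by
      intro q
      have hq : (n : ℤ) * e q = (i q : ℤ) * c q := by
        have hch := Nat.add_one_mul_choose_eq (n-1) (i q - 1)
        rw [show n - 1 + 1 = n from by omega,
          show i q - 1 + 1 = i q from by have := hi q; omega] at hch
        have hnn : n * (n - 1).choose (i q - 1) = i q * n.choose (i q) := by
          rw [hch]; ring
        simp only [hc, he]
        exact_mod_cast hnn
      calc (n : ℤ) * (e q * P q) = ((n:ℤ) * e q) * P q := by ring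
        _ = (i q : ℤ) * (c q * P q) := by rw [hq]; ring
        _ = (i q : ℤ) * ∏ p, c p := by
            rw [hP]; rw [Finset.mul_prod_erase _ c (Finset.mem_univ q)]
    rw [Finset.sum_congr rfl fun q _ => step q, ← Finset.sum_mul]
    rw [show (∑ q, (i q : ℤ)) = (n : ℤ) by rw [← hsum]; push_cast; ring]
  suffices h : ∀ x : ℤ, chernNum n x i = ∑ q, 2 * (n.choose (i q - 1) : ℤ) * P q by
    rw [h a, h b]
  intro x
  have hhom : (∏ q, chern n x (i q)).IsHomogeneous n := by
    have := MvPolynomial.IsHomogeneous.prod Finset.univ (fun q => chern n x (i q)) i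
      (fun q _ => chern_homog n x (i q) (hi q))
    rwa [hsum] at this
  have h1 := aeval_homog n hn _ hhom
  have h2 : MvPolynomial.aeval gmap (∏ q, chern n x (i q))
      = inl (∏ q, c q) + inr (∑ q, (2 * (n.choose (i q - 1) : ℤ) - x * e q) * P q) := by
    rw [map_prod]
    rw [Finset.prod_congr rfl fun q _ => aeval_chern n x (i q) (hi q)]
    exact prod_inl_inr _ _ _
  rw [h1] at h2
  have hY : coeffY n (∏ q, chern n x (i q)) = ∏ q, c q := by
    have := congrArg TrivSqZeroExt.fst h2
    simpa only [fst_add, fst_inl, fst_inr, add_zero, zero_add] using this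
  have hXY : coeffXY n (∏ q, chern n x (i q))
      = ∑ q, (2 * (n.choose (i q - 1) : ℤ) - x * e q) * P q := by
    have := congrArg TrivSqZeroExt.snd h2
    simpa only [snd_add, snd_inl, snd_inr, add_zero, zero_add] using this
  rw [chernNum, hY, hXY]
  rw [Finset.sum_congr rfl fun q _ => show (2 * (n.choose (i q - 1) : ℤ) - x * e q) * P q
    = 2 * (n.choose (i q - 1) : ℤ) * P q - x * (e q * P q) by ring]
  rw [Finset.sum_sub_distrib, ← Finset.mul_sum, key]
  ring
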